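/- Let x0 < 0, g(x) = (9x(2x0 − x)/4)^{1/3} and h(x) = ((x − x0)^2 + (4/9) g(x)^4)^{1/2} for x ∈ [2x0, 0]. Then for every x ∈ (2x0, 0): g'(x) = −(3/2)(x − x0)/g(x)^2, and the unit normal identity (−g'(x), 1)/((g'(x))^2 + 1)^{1/2} = (1/h(x)) · (x − x0, (2/3) g(x)^2) holds; moreover the right-hand side extends continuously to [2x0, 0] with value (−1, 0) at x = 2x0 and (1, 0) at x = 0. -/

import Mathlib

open Set

/-- The derivative formula for the normal Tricomi curve and
the unit outer normal identity along the elliptic arc `σ`, together with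
its continuous extension to the endpoints. -/
theorem normal_tricomi_unit_normal
    (x0 : ℝ) (hx0 : x0 < 0)
    (g h : ℝ → ℝ)
    (hg : ∀ x : ℝ, g x = (9 * x * (2 * x0 - x) / 4) ^ ((1 : ℝ) / 3))
    (hh : ∀ x : ℝ, h x = ((x - x0) ^ 2 + (4 / 9) * (g x) ^ 4) ^ ((1 : ℝ) / 2))
    (N : ℝ → ℝ × ℝ)
    (hN : ∀ x : ℝ, N x = ((x - x0) / h x, (2 / 3) * (g x) ^ 2 / h x)) :
    (∀ x ∈ Ioo (2 * x0) 0,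
      deriv g x = -(3 / 2) * (x - x0) / (g x) ^ 2 ∧
      (-(deriv g x) / ((deriv g x) ^ 2 + 1) ^ ((1 : ℝ) / 2),
        1 / ((deriv g x) ^ 2 + 1) ^ ((1 : ℝ) / 2)) = N x) ∧
    ContinuousOn N (Icc (2 * x0) 0) ∧
    N (2 * x0) = (-1, 0) ∧ N 0 = (1, 0) := by
  have h3 : ((1 : ℝ) / 3) ≠ 0 := by norm_num
  -- positivity of the expression under the square root on the closed interval
  have hinner : ∀ x ∈ Icc (2 * x0) 0, 0 < (x - x0) ^ 2 + (4 / 9) * (g x) ^ 4 := by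
    intro x hx
    rcases eq_or_ne x x0 with heq | hne
    · have hq : (0 : ℝ) < 9 * x * (2 * x0 - x) / 4 := by rw [heq]; nlinarith
      have hgpos : 0 < g x := by
        rw [hg]; exact Real.rpow_pos_of_pos hq _
      nlinarith [pow_pos hgpos 4, sq_nonneg (x - x0)]
    · have hsub : x - x0 ≠ 0 := sub_ne_zero.mpr hne
      have h1 : 0 < (x - x0) ^ 2 := by positivity
      have h2 : 0 ≤ (g x) ^ 4 := by positivity
      nlinarith
  have hhpos : ∀ x ∈ Icc (2 * x0) 0, 0 < h x := by
    intro x hx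
    rw [hh, ← Real.sqrt_eq_rpow]
    exact Real.sqrt_pos.mpr (hinner x hx)
  refine ⟨?_, ?_, ?_, ?_⟩
  · -- main pointwise statement
    intro x hx
    obtain ⟨hx1, hx2⟩ := hx
    have hQpos : (0 : ℝ) < 9 * x * (2 * x0 - x) / 4 := by nlinarith
    have hgx : g x = (9 * x * (2 * x0 - x) / 4) ^ ((1 : ℝ) / 3) := hg x
    have hGpos : 0 < g x := by rw [hgx]; exact Real.rpow_pos_of_pos hQpos _
    have hxIcc : x ∈ Icc (2 * x0) 0 := ⟨hx1.le, hx2.le⟩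
    have hHpos : 0 < h x := hhpos x hxIcc
    -- derivative of inner polynomial
    have hq' : HasDerivAt (fun y : ℝ => 9 * y * (2 * x0 - y) / 4)
        ((9 * (2 * x0 - x) + 9 * x * (-1)) / 4) x := by
      have h1 : HasDerivAt (fun y : ℝ => 9 * y) 9 x := by
        simpa using (hasDerivAt_id x).const_mul 9
      have h2 : HasDerivAt (fun y : ℝ => 2 * x0 - y) (-1) x := by
        simpa using (hasDerivAt_id x).const_sub (2 * x0)
      exact (h1.mul h2).div_const 4
    have hg' : HasDerivAt g
        (((9 * (2 * x0 - x) + 9 * x * (-1)) / 4) * ((1 : ℝ) / 3) *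
          (9 * x * (2 * x0 - x) / 4) ^ ((1 : ℝ) / 3 - 1)) x := by
      rw [funext hg]
      exact hq'.rpow_const (Or.inl hQpos.ne')
    have hg2 : (g x) ^ 2 = (9 * x * (2 * x0 - x) / 4) ^ ((2 : ℝ) / 3) := by
      rw [hgx, ← Real.rpow_natCast ((9 * x * (2 * x0 - x) / 4) ^ ((1 : ℝ) / 3)) 2,
        ← Real.rpow_mul hQpos.le]
      norm_num
    have hQ23 : (0 : ℝ) < (9 * x * (2 * x0 - x) / 4) ^ ((2 : ℝ) / 3) :=
      Real.rpow_pos_of_pos hQpos _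
    have hd : deriv g x = -(3 / 2) * (x - x0) / (g x) ^ 2 := by
      rw [hg'.deriv, hg2,
        show ((1 : ℝ) / 3 - 1) = -((2 : ℝ) / 3) by norm_num,
        Real.rpow_neg hQpos.le]
      field_simp
      ring
    refine ⟨hd, ?_⟩
    have hH2 : (h x) ^ 2 = (x - x0) ^ 2 + (4 / 9) * (g x) ^ 4 := by
      rw [hh, ← Real.sqrt_eq_rpow, Real.sq_sqrt (by positivity)]
    have hS : ((deriv g x) ^ 2 + 1) ^ ((1 : ℝ) / 2) = 3 * h x / (2 * (g x) ^ 2) := by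
      rw [← Real.sqrt_eq_rpow]
      rw [show (deriv g x) ^ 2 + 1 = (3 * h x / (2 * (g x) ^ 2)) ^ 2 from ?_]
      · exact Real.sqrt_sq (by positivity)
      · rw [hd]
        have hG2 : (g x) ^ 2 ≠ 0 := by positivity
        field_simp
        nlinarith [hH2, sq_nonneg (g x)]
    rw [hN, hS, hd]
    have hG2 : (g x) ^ 2 ≠ 0 := by positivity
    have hH : h x ≠ 0 := hHpos.ne'
    simp only [Prod.mk.injEq]
    constructor <;> (field_simp; try ring)
  · -- continuity
    have hNfun : N = fun x => ((x - x0) / h x, (2 / 3) * (g x) ^ 2 / h x) := funext hN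
    have hgc : Continuous g := by
      rw [funext hg]
      refine Continuous.rpow_const ?_ (fun x => Or.inr (by norm_num))
      exact ((continuous_const.mul continuous_id).mul
        (continuous_const.sub continuous_id)).div_const 4
    have hhc : Continuous h := by
      rw [funext hh]
      refine Continuous.rpow_const ?_ (fun x => Or.inr (by norm_num))
      exact ((continuous_id.sub continuous_const).pow 2).add
        (continuous_const.mul (hgc.pow 4))
    rw [hNfun]
    apply ContinuousOn.prodMk
    · exact ContinuousOn.div ((continuous_id.sub continuous_const).continuousOn)
        hhc.continuousOn (fun x hx => (hhpos x hx).ne')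
    · exact ContinuousOn.div ((continuous_const.mul (hgc.pow 2)).continuousOn)
        hhc.continuousOn (fun x hx => (hhpos x hx).ne')
  · -- endpoint 2*x0
    have hg2x0 : g (2 * x0) = 0 := by
      rw [hg (2 * x0), show 9 * (2 * x0) * (2 * x0 - 2 * x0) / 4 = 0 by ring]
      exact Real.zero_rpow h3
    have hh2x0 : h (2 * x0) = -x0 := by
      rw [hh, hg2x0, show (2 * x0 - x0) ^ 2 + 4 / 9 * (0 : ℝ) ^ 4 = x0 ^ 2 by ring,
        ← Real.sqrt_eq_rpow, Real.sqrt_sq_eq_abs, abs_of_neg hx0]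
    rw [hN, hh2x0, hg2x0]
    have hx0ne : x0 ≠ 0 := hx0.ne
    simp only [Prod.mk.injEq]
    constructor
    · rw [show 2 * x0 - x0 = x0 by ring]; field_simp
    · norm_num
  · -- endpoint 0
    have hg0 : g 0 = 0 := by
      rw [hg 0, show 9 * 0 * (2 * x0 - 0) / 4 = 0 by ring]
      exact Real.zero_rpow h3
    have hh0 : h 0 = -x0 := by
      rw [hh, hg0, show ((0 : ℝ) - x0) ^ 2 + 4 / 9 * (0 : ℝ) ^ 4 = x0 ^ 2 by ring,
        ← Real.sqrt_eq_rpow, Real.sqrt_sq_eq_abs, abs_of_neg hx0]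
    rw [hN, hh0, hg0]
    have hx0ne : x0 ≠ 0 := hx0.ne
    simp only [Prod.mk.injEq]
    constructor
    · rw [show (0:ℝ) - x0 = -x0 by ring]; field_simp
    · norm_num
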